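/- Let X = ℓ¹ with canonical basis (e_n), and define f_n : ℓ¹ → ℝ by f_n(x) = |⟨e_n, x⟩|^{1+1/n}. Then I_f(x) := Σ_n f_n(x) is finite and convex on ℓ¹, each f_n is Fréchet differentiable, I_f is Gâteaux differentiable at 0 with Gâteaux derivative 0, but I_f is not Fréchet differentiable at 0. -/

import Mathlib

noncomputable section

/-- The Banach space `ℓ¹` of absolutely summable real sequences. -/
abbrev ellOne : Type := lp (fun _ : ℕ => ℝ) 1

/-- The integrand `f_n(x) = |⟨e_n, x⟩|^{1+1/n}`, indexed so that `fn n` corresponds to the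
summand with exponent `1 + 1/(n+1)` (i.e. the paper's `f_{n+1}`). -/
def fn (n : ℕ) (x : ellOne) : ℝ := |x n| ^ ((1 : ℝ) + 1 / (n + 1))

/-- `I_f(x) = Σ_n |x_n|^{1+1/n}`. -/
def If (x : ellOne) : ℝ := ∑' n : ℕ, fn n x

namespace AuxIf

/-- The exponent. -/
def pn (n : ℕ) : ℝ := (1 : ℝ) + 1 / (n + 1)

lemma one_lt_pn (n : ℕ) : 1 < pn n := by
  have : (0:ℝ) < 1 / (n + 1) := by positivity
  simp only [pn]; linarith

lemma pn_pos (n : ℕ) : 0 < pn n := lt_trans one_pos (one_lt_pn n)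

lemma pn_ne (n : ℕ) : pn n ≠ 0 := (pn_pos n).ne'

lemma fn_eq (n : ℕ) (x : ellOne) : fn n x = |x n| ^ pn n := rfl

lemma fn_nonneg (n : ℕ) (x : ellOne) : 0 ≤ fn n x :=
  Real.rpow_nonneg (abs_nonneg _) _

lemma fn_zero (n : ℕ) : fn n (0 : ellOne) = 0 := by
  rw [fn_eq]
  have : ((0 : ellOne) : ∀ _ : ℕ, ℝ) n = 0 := by rw [lp.coeFn_zero]; rfl
  rw [this, abs_zero, Real.zero_rpow (pn_ne n)]

lemma If_zero : If (0 : ellOne) = 0 := by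
  simp [If, fn_zero]

/-- coordinate evaluation as a continuous linear map -/
def evalCLM (n : ℕ) : ellOne →L[ℝ] ℝ :=
  LinearMap.mkContinuous
    { toFun := fun x : ellOne => x n
      map_add' := fun x y => congrFun (lp.coeFn_add x y) n
      map_smul' := fun c x => congrFun (lp.coeFn_smul c x) n }
    1 (fun x => by
      simpa using lp.norm_apply_le_norm one_ne_zero x n)

lemma summable_norm (x : ellOne) : Summable fun n : ℕ => |x n| := by
  have := (lp.memℓp x).summable (p := 1) (by norm_num)
  simpa [Real.norm_eq_abs] using this

lemma summable_fn (x : ellOne) : Summable fun n : ℕ => fn n x := by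
  refine Summable.of_norm_bounded_eventually (g := fun n => |x n|) (summable_norm x) ?_
  have h1 : ∀ᶠ n in Filter.cofinite, |x n| ≤ 1 := by
    have := (summable_norm x).tendsto_cofinite_zero
    exact this.eventually (eventually_le_nhds (by norm_num : (0:ℝ) < 1))
  filter_upwards [h1] with n hn
  rw [Real.norm_eq_abs, abs_of_nonneg (fn_nonneg n x), fn_eq]
  rcases eq_or_lt_of_le (abs_nonneg (x n)) with h | h
  · rw [← h, Real.zero_rpow (pn_ne n)]
  · calc |x n| ^ pn n ≤ |x n| ^ (1:ℝ) :=
        Real.rpow_le_rpow_of_exponent_ge h hn (one_lt_pn n).le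
    _ = |x n| := Real.rpow_one _

lemma coe_smul_apply (t : ℝ) (u : ellOne) (n : ℕ) : (t • u : ellOne) n = t * u n :=
  congrFun (lp.coeFn_smul t u) n

lemma fn_smul (n : ℕ) (t : ℝ) (u : ellOne) : fn n (t • u) = |t| ^ pn n * fn n u := by
  rw [fn_eq, fn_eq, coe_smul_apply, abs_mul, Real.mul_rpow (abs_nonneg _) (abs_nonneg _)]

lemma convexOn_fn (n : ℕ) : ConvexOn ℝ Set.univ (fn n) := by
  refine ⟨convex_univ, fun x _ y _ a b ha hb hab => ?_⟩
  have hcoord : ((a • x + b • y : ellOne) : ∀ _ : ℕ, ℝ) n = a * x n + b * y n := by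
    rw [lp.coeFn_add, Pi.add_apply, coe_smul_apply, coe_smul_apply]
  have h1 : |a * x n + b * y n| ≤ a * |x n| + b * |y n| := by
    calc |a * x n + b * y n| ≤ |a * x n| + |b * y n| := abs_add_le _ _
    _ = a * |x n| + b * |y n| := by
        rw [abs_mul, abs_mul, abs_of_nonneg ha, abs_of_nonneg hb]
  calc fn n (a • x + b • y) = |a * x n + b * y n| ^ pn n := by rw [fn_eq, hcoord]
  _ ≤ (a * |x n| + b * |y n|) ^ pn n :=
      Real.rpow_le_rpow (abs_nonneg _) h1 (pn_pos n).le
  _ ≤ a * |x n| ^ pn n + b * |y n| ^ pn n := by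
      have := (convexOn_rpow (one_lt_pn n).le).2 (Set.mem_Ici.2 (abs_nonneg (x n)))
        (Set.mem_Ici.2 (abs_nonneg (y n))) ha hb hab
      simpa [smul_eq_mul] using this
  _ = a * fn n x + b * fn n y := rfl

lemma convexOn_If : ConvexOn ℝ Set.univ If := by
  refine ⟨convex_univ, fun x _ y _ a b ha hb hab => ?_⟩
  have hsx := (summable_fn x).mul_left a
  have hsy := (summable_fn y).mul_left b
  calc If (a • x + b • y) ≤ ∑' n : ℕ, (a * fn n x + b * fn n y) := by
        refine Summable.tsum_le_tsum (fun n => ?_) (summable_fn _) (hsx.add hsy)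
        have := (convexOn_fn n).2 (Set.mem_univ x) (Set.mem_univ y) ha hb hab
        simpa [smul_eq_mul] using this
  _ = a • If x + b • If y := by
        rw [Summable.tsum_add hsx hsy, tsum_mul_left, tsum_mul_left]
        simp [If, smul_eq_mul]

lemma differentiable_fn (n : ℕ) : Differentiable ℝ (fn n) := by
  have h1 : Differentiable ℝ (fun t : ℝ => |t| ^ pn n) :=
    fun t => (hasDerivAt_abs_rpow t (one_lt_pn n)).differentiableAt
  have h2 : fn n = (fun t : ℝ => |t| ^ pn n) ∘ (evalCLM n) := rfl
  rw [h2]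
  exact h1.comp (evalCLM n).differentiable

lemma tendsto_rpow_coeff (n : ℕ) :
    Filter.Tendsto (fun t : ℝ => |t| ^ ((1:ℝ)/(n+1))) (nhds 0) (nhds 0) := by
  have hc : (0:ℝ) < 1/(n+1) := by positivity
  have h1 : Filter.Tendsto (fun t : ℝ => |t|) (nhds 0) (nhds 0) := by
    simpa using continuous_abs.tendsto (0:ℝ)
  have h2 : ContinuousAt (fun s : ℝ => s ^ ((1:ℝ)/(n+1))) 0 :=
    Real.continuousAt_rpow_const 0 _ (Or.inr hc.le)
  have h3 := h2.tendsto.comp h1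
  rw [Real.zero_rpow hc.ne'] at h3
  exact h3

lemma gateaux (u : ellOne) : HasDerivAt (fun t : ℝ => If (t • u)) 0 0 := by
  rw [hasDerivAt_iff_tendsto_slope]
  set F : ℝ → ℝ := fun t => If (t • u) with hF
  have hG : Filter.Tendsto (fun t : ℝ => ∑' n : ℕ, |t| ^ ((1:ℝ)/(n+1)) * fn n u)
      (nhdsWithin (0:ℝ) {(0:ℝ)}ᶜ) (nhds 0) := by
    have key := tendsto_tsum_of_dominated_convergence
      (𝓕 := nhdsWithin (0:ℝ) {(0:ℝ)}ᶜ)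
      (f := fun (t : ℝ) (n : ℕ) => |t| ^ ((1:ℝ)/(n+1)) * fn n u)
      (g := fun _ : ℕ => (0:ℝ))
      (bound := fun n : ℕ => fn n u) (summable_fn u) ?_ ?_
    · simpa using key
    · intro n
      have h4 := (tendsto_rpow_coeff n).mono_left
        (nhdsWithin_le_nhds (s := {(0:ℝ)}ᶜ))
      simpa using h4.mul_const (fn n u)
    · have h1 : ∀ᶠ t : ℝ in nhdsWithin (0:ℝ) {(0:ℝ)}ᶜ, |t| ≤ 1 := by
        apply Filter.Eventually.filter_mono nhdsWithin_le_nhds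
        filter_upwards [Metric.closedBall_mem_nhds (0:ℝ) one_pos] with t ht
        simpa [Real.dist_eq] using ht
      filter_upwards [h1] with t ht n
      have h2 : |t| ^ ((1:ℝ)/(n+1)) ≤ 1 :=
        Real.rpow_le_one (abs_nonneg t) ht (by positivity)
      rw [Real.norm_eq_abs,
        abs_of_nonneg (mul_nonneg (Real.rpow_nonneg (abs_nonneg t) _) (fn_nonneg n u))]
      exact mul_le_of_le_one_left (fn_nonneg n u) h2
  refine squeeze_zero_norm' ?_ hG
  filter_upwards [self_mem_nhdsWithin] with t (ht : t ≠ (0:ℝ))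
  have htp : (0:ℝ) < |t| := abs_pos.mpr ht
  have hF0 : F 0 = 0 := by simp [hF, If_zero]
  have hFt : 0 ≤ F t := tsum_nonneg (fun n => fn_nonneg n _)
  have hslope : ‖slope F 0 t‖ = F t / |t| := by
    rw [slope_def_field, hF0, sub_zero, sub_zero, Real.norm_eq_abs, abs_div,
      abs_of_nonneg hFt]
  rw [hslope]
  have hterm : ∀ n : ℕ, fn n (t • u) / |t| = |t| ^ ((1:ℝ)/(n+1)) * fn n u := by
    intro n
    rw [fn_smul]
    have hp1 : |t| ^ pn n / |t| = |t| ^ ((1:ℝ)/(n+1)) := by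
      have : pn n - 1 = (1:ℝ)/(n+1) := by simp [pn]
      rw [← this, Real.rpow_sub htp, Real.rpow_one]
    rw [mul_comm (|t| ^ pn n), mul_div_assoc, hp1, mul_comm]
  have hFtsum : F t / |t| = ∑' n : ℕ, fn n (t • u) / |t| := by
    simp only [hF, If]
    exact tsum_div_const.symm
  rw [hFtsum, tsum_congr hterm]

def xk (k : ℕ) : ellOne := lp.single 1 k (((k:ℝ)+1)⁻¹)

lemma norm_xk (k : ℕ) : ‖xk k‖ = ((k:ℝ)+1)⁻¹ := by
  have h := lp.norm_single (p := 1) (E := fun _ : ℕ => ℝ) (by norm_num) k (((k:ℝ)+1)⁻¹)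
  rw [xk]
  rw [h, Real.norm_eq_abs, abs_of_pos (by positivity)]

lemma If_xk (k : ℕ) : If (xk k) = (((k:ℝ)+1)⁻¹) ^ pn k := by
  rw [If, tsum_eq_single k]
  · rw [fn_eq, xk, lp.single_apply_self, abs_of_pos (by positivity)]
  · intro m hm
    rw [fn_eq, xk, lp.single_apply_ne 1 k _ hm, abs_zero, Real.zero_rpow (pn_ne m)]

lemma not_frechet : ¬ DifferentiableAt ℝ If 0 := by
  intro hd
  have hL : HasFDerivAt If (fderiv ℝ If 0) 0 := hd.hasFDerivAt
  have hL0 : fderiv ℝ If 0 = 0 := by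
    refine ContinuousLinearMap.ext fun u => ?_
    have h1 : HasDerivAt (fun t : ℝ => t • u) u 0 := by
      simpa using (hasDerivAt_id (0:ℝ)).smul_const u
    have h2 : HasFDerivAt If (fderiv ℝ If 0) ((fun t : ℝ => t • u) 0) := by
      simpa using hL
    have h3 := h2.comp_hasDerivAt 0 h1
    have h4 := (gateaux u).unique h3
    simpa using h4.symm
  rw [hL0] at hL
  have hlo : (fun h : ellOne => If h) =o[nhds (0:ellOne)] fun h : ellOne => h := by
    have := hasFDerivAt_iff_isLittleO_nhds_zero.mp hL
    simpa [If_zero] using this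
  have hev : ∀ᶠ h : ellOne in nhds 0, ‖If h‖ ≤ 1/2 * ‖h‖ :=
    hlo.def (by norm_num)
  have hxk0 : Filter.Tendsto xk Filter.atTop (nhds (0:ellOne)) := by
    rw [tendsto_zero_iff_norm_tendsto_zero]
    simp only [norm_xk]
    simpa [one_div] using tendsto_one_div_add_atTop_nhds_zero_nat (𝕜 := ℝ)
  have hr : Filter.Tendsto (fun k : ℕ => ((k:ℝ)+1) ^ (-(1:ℝ)/((k:ℝ)+1)))
      Filter.atTop (nhds 1) := by
    refine tendsto_rpow_neg_div.comp ?_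
    exact Filter.tendsto_atTop_add_const_right _ 1 tendsto_natCast_atTop_atTop
  have hrev : ∀ᶠ k : ℕ in Filter.atTop,
      (1:ℝ)/2 < ((k:ℝ)+1) ^ (-(1:ℝ)/((k:ℝ)+1)) :=
    hr.eventually (eventually_gt_nhds (by norm_num))
  obtain ⟨k, hk1, hk2⟩ := ((hxk0.eventually hev).and hrev).exists
  set a : ℝ := ((k:ℝ)+1)⁻¹ with ha
  have hapos : 0 < a := by positivity
  have hIfa : If (xk k) = a * (((k:ℝ)+1) ^ (-(1:ℝ)/((k:ℝ)+1))) := by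
    rw [If_xk]
    have h5 : pn k = 1 + (1:ℝ)/((k:ℝ)+1) := rfl
    rw [h5, Real.rpow_add hapos, Real.rpow_one]
    congr 1
    rw [ha, Real.inv_rpow (by positivity), ← Real.rpow_neg (by positivity), neg_div]
  have hnonneg : 0 ≤ If (xk k) := tsum_nonneg (fun n => fn_nonneg n _)
  rw [Real.norm_eq_abs, abs_of_nonneg hnonneg, norm_xk k, hIfa, ← ha] at hk1
  nlinarith [hk1, hk2, hapos]

end AuxIf

theorem If_gateaux_not_frechet :
    (∀ x : ellOne, Summable (fun n : ℕ => fn n x)) ∧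
    ConvexOn ℝ Set.univ If ∧
    (∀ n : ℕ, Differentiable ℝ (fn n)) ∧
    (∀ u : ellOne, HasDerivAt (fun t : ℝ => If (t • u)) 0 0) ∧
    ¬ DifferentiableAt ℝ If 0 := by
  exact ⟨AuxIf.summable_fn, AuxIf.convexOn_If, AuxIf.differentiable_fn,
    AuxIf.gateaux, AuxIf.not_frechet⟩
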